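/- The counting-regular languages are not closed under union or intersection with regular languages: there exist a context-free counting-regular language L ⊆ {0,1}* and a regular language R ⊆ {0,1}* such that neither L ∩ R nor L ∪ R is counting-regular. -/

import Mathlib

/-- The counting function of a language: the number of words of length `n`. -/
noncomputable def countFn {α : Type*} (L : Set (List α)) (n : ℕ) : ℕ :=
  Set.ncard {w | w ∈ L ∧ w.length = n}

/-- A language is regular if it is accepted by a DFA with finitely many states. -/
def IsRegularLang {α : Type*} (L : Set (List α)) : Prop :=
  ∃ (σ : Type) (_ : Fintype σ) (M : DFA α σ), ∀ w, w ∈ M.accepts ↔ w ∈ L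

/-- A language is counting-regular if some regular language over a (possibly different)
finite alphabet has the same counting function. -/
def CountingRegular {α : Type*} (L : Set (List α)) : Prop :=
  ∃ (β : Type) (_ : Fintype β) (L' : Set (List β)),
    IsRegularLang L' ∧ ∀ n, countFn L' n = countFn L n


/-- A language is context-free if it is generated by some context-free grammar. -/
def IsCFLang {α : Type} (L : Set (List α)) : Prop :=
  ∃ g : ContextFreeGrammar.{0} α, ∀ w, w ∈ g.language ↔ w ∈ L

open Finset

section words
variable {β : Type*} [Fintype β] [DecidableEq β]

/-- Finset of all words of length `n`. -/
def allW (β : Type*) [Fintype β] [DecidableEq β] : ℕ → Finset (List β)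
  | 0 => {[]}
  | n + 1 => (Finset.univ (α := β)).biUnion (fun a => (allW β n).image (a :: ·))

lemma mem_allW (n : ℕ) (w : List β) : w ∈ allW β n ↔ w.length = n := by
  induction n generalizing w with
  | zero => simp [allW, List.length_eq_zero_iff]
  | succ n ih =>
    simp only [allW, Finset.mem_biUnion, Finset.mem_univ, true_and, Finset.mem_image]
    constructor
    · rintro ⟨a, v, hv, rfl⟩
      simp [ih _ |>.mp hv]
    · intro hw
      match w with
      | a :: v => exact ⟨a, v, (ih v).mpr (by simpa using hw), rfl⟩

lemma countFn_eq_card (L : Set (List β)) (n : ℕ) [DecidablePred (· ∈ L)] :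
    countFn L n = ((allW β n).filter (· ∈ L)).card := by
  rw [← Set.ncard_coe_finset]
  unfold countFn
  apply congrArg
  ext w
  simp [countFn, mem_allW, and_comm]

lemma card_filter_allW_succ (n : ℕ) (P : List β → Prop) [DecidablePred P] :
    ((allW β (n + 1)).filter P).card
      = ∑ a : β, ((allW β n).filter (fun w => P (a :: w))).card := by
  show ((Finset.univ.biUnion fun a => (allW β n).image (a :: ·)).filter P).card = _
  rw [Finset.filter_biUnion, Finset.card_biUnion]
  · refine Finset.sum_congr rfl (fun a _ => ?_)
    rw [Finset.filter_image, Finset.card_image_of_injective]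
    intro x y hxy; simpa using hxy
  · intro x _ y _ hxy
    simp only [Finset.disjoint_left]
    intro w hw hw'
    simp only [Finset.mem_filter, Finset.mem_image] at hw hw'
    obtain ⟨⟨v, _, rfl⟩, _⟩ := hw
    obtain ⟨⟨u, _, h⟩, _⟩ := hw'
    exact hxy (List.head_eq_of_cons_eq h.symm) |>.elim

end words

section fin2counts

lemma count01_length (w : List (Fin 2)) : w.count 0 + w.count 1 = w.length := by
  induction w with
  | nil => simp
  | cons a t ih =>
    fin_cases a <;> simp [List.count_cons] <;> omega

lemma card_ones (n k : ℕ) :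
    ((allW (Fin 2) n).filter (fun w => w.count 1 = k)).card = n.choose k := by
  induction n generalizing k with
  | zero =>
    cases k with
    | zero =>
      rw [show allW (Fin 2) 0 = {[]} from rfl]
      rw [Finset.filter_singleton]
      simp
    | succ k =>
      rw [show allW (Fin 2) 0 = {[]} from rfl]
      rw [Finset.filter_singleton]
      simp
  | succ n ih =>
    rw [card_filter_allW_succ, Fin.sum_univ_two]
    have h0 : ∀ w : List (Fin 2), (0 :: w).count 1 = w.count 1 := by
      intro w; simp [List.count_cons]
    have h1 : ∀ w : List (Fin 2), (1 :: w).count 1 = w.count 1 + 1 := by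
      intro w; simp [List.count_cons]
    simp only [h0, h1]
    cases k with
    | zero =>
      have : ((allW (Fin 2) n).filter (fun w => w.count 1 + 1 = 0)).card = 0 := by
        simp
      rw [this, ih 0]
      simp
    | succ k =>
      have e : Finset.filter (fun w : List (Fin 2) => w.count 1 + 1 = k + 1) (allW (Fin 2) n)
          = Finset.filter (fun w => w.count 1 = k) (allW (Fin 2) n) := by
        apply Finset.filter_congr
        intro w _
        simp
      rw [e, ih (k+1), ih k, Nat.choose_succ_succ]
      simp only [Nat.succ_eq_add_one]
      omega

lemma card_allW (n : ℕ) : (allW (Fin 2) n).card = 2 ^ n := by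
  induction n with
  | zero => rfl
  | succ n ih =>
    have := card_filter_allW_succ (β := Fin 2) n (fun _ => True)
    simpa [ih, Fin.sum_univ_two, two_mul, pow_succ, mul_comm] using this

end fin2counts

section lucas

lemma lucas2 (a : ℕ) : ∀ b : ℕ,
    Nat.choose (2*a) (2*b) % 2 = Nat.choose a b % 2 ∧
    Nat.choose (2*a+1) (2*b) % 2 = Nat.choose a b % 2 ∧
    Nat.choose (2*a) (2*b+1) % 2 = 0 ∧
    Nat.choose (2*a+1) (2*b+1) % 2 = Nat.choose a b % 2 := by
  induction a with
  | zero =>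
    intro b
    cases b with
    | zero => simp
    | succ b =>
      have h1 : Nat.choose 0 (2*(b+1)) = 0 := Nat.choose_eq_zero_of_lt (by omega)
      have h2 : Nat.choose 1 (2*(b+1)) = 0 := Nat.choose_eq_zero_of_lt (by omega)
      have h3 : Nat.choose 0 (2*(b+1)+1) = 0 := Nat.choose_eq_zero_of_lt (by omega)
      have h4 : Nat.choose 1 (2*(b+1)+1) = 0 := Nat.choose_eq_zero_of_lt (by omega)
      have h5 : Nat.choose 0 (b+1) = 0 := Nat.choose_eq_zero_of_lt (by omega)
      simp only [Nat.mul_zero, Nat.zero_mul, Nat.zero_add] at *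
      omega
  | succ a ih =>
    -- part 3 for a+1
    have h3 : ∀ b : ℕ, Nat.choose (2*(a+1)) (2*b+1) % 2 = 0 := by
      intro b
      have e : Nat.choose (2*(a+1)) (2*b+1) = Nat.choose (2*a+1) (2*b) + Nat.choose (2*a+1) (2*b+1) := by
        have := Nat.choose_succ_succ (2*a+1) (2*b)
        convert this using 2 <;> try omega
      obtain ⟨_, i2, _, i4⟩ := ih b
      omega
    have h1 : ∀ b : ℕ, Nat.choose (2*(a+1)) (2*b) % 2 = Nat.choose (a+1) b % 2 := by
      intro b
      cases b with
      | zero => simp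
      | succ b =>
        have e : Nat.choose (2*(a+1)) (2*(b+1)) = Nat.choose (2*a+1) (2*b+1) + Nat.choose (2*a+1) (2*b+2) := by
          have := Nat.choose_succ_succ (2*a+1) (2*b+1)
          convert this using 2 <;> try omega
        have e2 : Nat.choose (2*a+1) (2*b+2) = Nat.choose (2*a+1) (2*(b+1)) := by
          congr 1
        have ep : Nat.choose (a+1) (b+1) = Nat.choose a b + Nat.choose a (b+1) := Nat.choose_succ_succ a b
        obtain ⟨_, _, _, i4⟩ := ih b
        obtain ⟨_, i2', _, _⟩ := ih (b+1)
        omega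
    have h2 : ∀ b : ℕ, Nat.choose (2*(a+1)+1) (2*b) % 2 = Nat.choose (a+1) b % 2 := by
      intro b
      cases b with
      | zero => simp
      | succ b =>
        have e : Nat.choose (2*(a+1)+1) (2*(b+1)) = Nat.choose (2*(a+1)) (2*b+1) + Nat.choose (2*(a+1)) (2*(b+1)) := by
          have := Nat.choose_succ_succ (2*(a+1)) (2*b+1)
          convert this using 2 <;> try omega
          rw [show 2*(b+1) = (2*b+1).succ by omega]
        have := h3 b
        have := h1 (b+1)
        omega
    have h4 : ∀ b : ℕ, Nat.choose (2*(a+1)+1) (2*b+1) % 2 = Nat.choose (a+1) b % 2 := by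
      intro b
      have e : Nat.choose (2*(a+1)+1) (2*b+1) = Nat.choose (2*(a+1)) (2*b) + Nat.choose (2*(a+1)) (2*b+1) := by
        have := Nat.choose_succ_succ (2*(a+1)) (2*b)
        convert this using 2 <;> try omega
      have := h3 b
      have := h1 b
      omega
    exact fun b => ⟨h1 b, h2 b, h3 b, h4 b⟩

lemma central_even (j : ℕ) : Nat.choose (2*(j+1)) (j+1) % 2 = 0 := by
  have e : Nat.choose (2*(j+1)) (j+1) = Nat.choose (2*j+1) j + Nat.choose (2*j+1) (j+1) := by
    have := Nat.choose_succ_succ (2*j+1) j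
    convert this using 2 <;> try omega
  have s : Nat.choose (2*j+1) (j+1) = Nat.choose (2*j+1) j := by
    have := Nat.choose_symm (n := 2*j+1) (k := j) (by omega)
    have e2 : 2*j+1-j = j+1 := by omega
    rw [e2] at this
    exact this
  omega

/-- The key parity characterization: `C(2m+1, m+1)` is odd iff `m+1` is a power of 2. -/
lemma odd_choose_iff : ∀ m : ℕ, (Nat.choose (2*m+1) (m+1)) % 2 = 1 ↔ ∃ k, m+1 = 2^k := by
  intro m
  induction m using Nat.strong_induction_on with
  | _ m ih =>
    rcases Nat.even_or_odd m with ⟨j, hj⟩ | ⟨j, hj⟩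
    · -- m = 2j
      subst hj
      rcases Nat.eq_zero_or_pos j with rfl | hj1
      · simpa using ⟨0, rfl⟩
      · -- C(4j+1, 2j+1) ≡ C(2j, j) ≡ 0 ; and 2j+1 odd > 1 not a power
        obtain ⟨_, _, _, i4⟩ := lucas2 (2*j) j
        have e1 : 2*(2*j) + 1 = 2*(j+j)+1 := by ring_nf
        have e4 : Nat.choose (2*(2*j)+1) (2*j+1) % 2 = Nat.choose (2*j) j % 2 := i4
        have hc : Nat.choose (2*j) j % 2 = 0 := by
          obtain ⟨i, rfl⟩ : ∃ i, j = i + 1 := ⟨j - 1, by omega⟩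
          exact central_even i
        constructor
        · intro h
          exfalso
          have : Nat.choose (2*(j+j)+1) (j+j+1) % 2 = 0 := by
            have : 2*(j+j)+1 = 2*(2*j)+1 := by ring_nf
            rw [this]
            have : (j+j+1) = 2*j+1 := by omega
            rw [this]
            omega
          omega
        · rintro ⟨k, hk⟩
          exfalso
          cases k with
          | zero => rw [pow_zero] at hk; omega
          | succ k =>
            have : (2:ℕ)^(k+1) = 2 * 2^k := by ring
            omega
    · -- m = 2j+1
      subst hj
      obtain ⟨_, i2, _, _⟩ := lucas2 (2*j+1) (j+1)
      have e : Nat.choose (2*(2*j+1)+1) ((2*j+1)+1) % 2 = Nat.choose (2*j+1) (j+1) % 2 := by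
        have h1 : (2*j+1)+1 = 2*(j+1) := by omega
        rw [h1]
        exact i2
      rw [e, ih j (by omega)]
      constructor
      · rintro ⟨k, hk⟩
        exact ⟨k+1, by rw [pow_succ]; omega⟩
      · rintro ⟨k, hk⟩
        cases k with
        | zero => rw [pow_zero] at hk; omega
        | succ k =>
          refine ⟨k, ?_⟩
          have : (2:ℕ)^(k+1) = 2 * 2^k := by ring
          omega

end lucas

section periodic

lemma iterate_evPeriod {X : Type*} [Finite X] (f : X → X) (x : X) :
    ∃ N p, 0 < p ∧ ∀ n, N ≤ n → f^[n + p] x = f^[n] x := by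
  obtain ⟨i, j, hij, hfe⟩ := Finite.exists_ne_map_eq_of_infinite (fun n : ℕ => f^[n] x)
  rcases Nat.lt_or_ge i j with hlt | hge
  · refine ⟨i, j - i, by omega, fun n hn => ?_⟩
    have h1 : n + (j - i) = (n - i) + j := by omega
    have h2 : n = (n - i) + i := by omega
    rw [h1, Function.iterate_add_apply, hfe.symm, ← Function.iterate_add_apply, ← h2]
  · have hlt : j < i := by omega
    refine ⟨j, i - j, by omega, fun n hn => ?_⟩
    have h1 : n + (i - j) = (n - j) + i := by omega
    have h2 : n = (n - j) + j := by omega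
    rw [h1, Function.iterate_add_apply, hfe, ← Function.iterate_add_apply, ← h2]

lemma cast_parity_eq {a b : ℕ} (h : (a : ZMod 2) = (b : ZMod 2)) : a % 2 = b % 2 := by
  have h2 : ((a % 2 : ℕ) : ZMod 2) = ((b % 2 : ℕ) : ZMod 2) := by
    rw [ZMod.natCast_mod, ZMod.natCast_mod]; exact h
  rcases Nat.mod_two_eq_zero_or_one a with h1 | h1 <;>
    rcases Nat.mod_two_eq_zero_or_one b with hb1 | hb1 <;>
    rw [h1, hb1] at h2 ⊢ <;>
    first
      | rfl
      | (exfalso; rw [Nat.cast_zero, Nat.cast_one] at h2; exact (by decide : (0 : ZMod 2) ≠ 1) (by rw [h2]) )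
      | (exfalso; rw [Nat.cast_zero, Nat.cast_one] at h2; exact (by decide : (0 : ZMod 2) ≠ 1) (by rw [← h2]))

/-- The counting function of any counting-regular language is eventually periodic mod 2. -/
lemma countingRegular_parity {K : Set (List (Fin 2))} (h : CountingRegular K) :
    ∃ N p, 0 < p ∧ ∀ n, N ≤ n → countFn K (n + p) % 2 = countFn K n % 2 := by
  classical
  obtain ⟨β, fβ, L', ⟨σ, fσ, M, hM⟩, hcount⟩ := h
  haveI := fβ
  haveI := fσ
  haveI : DecidableEq β := Classical.decEq β
  -- per-state word counts mod 2
  set D : ℕ → (σ → σ → ZMod 2) :=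
    fun n s t => (((allW β n).filter (fun w => M.evalFrom s w = t)).card : ZMod 2) with hD
  set Φ : (σ → σ → ZMod 2) → (σ → σ → ZMod 2) :=
    fun v s t => ∑ a : β, v (M.step s a) t with hΦ
  have hstep : ∀ n, D (n + 1) = Φ (D n) := by
    intro n
    funext s t
    show (((allW β (n+1)).filter (fun w => M.evalFrom s w = t)).card : ZMod 2) = _
    rw [card_filter_allW_succ n (fun w => M.evalFrom s w = t), Nat.cast_sum]
    rfl
  have hiter : ∀ n, D n = Φ^[n] (D 0) := by
    intro n
    induction n with
    | zero => rfl
    | succ n ih => rw [hstep n, ih, Function.iterate_succ_apply']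
  obtain ⟨N, p, hp, hper⟩ := iterate_evPeriod Φ (D 0)
  refine ⟨N, p, hp, fun n hn => ?_⟩
  have hDper : D (n + p) = D n := by rw [hiter (n+p), hiter n]; exact hper n hn
  -- express countFn L' in terms of D
  have hexp : ∀ m, (countFn L' m : ZMod 2) = ∑ t : σ, if t ∈ M.accept then D m M.start t else 0 := by
    intro m
    rw [countFn_eq_card L' m]
    have hfe : (allW β m).filter (· ∈ L') = (allW β m).filter (fun w => M.evalFrom M.start w ∈ M.accept) := by
      apply Finset.filter_congr
      intro w _
      have := (hM w).symm
      rw [DFA.mem_accepts] at this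
      exact this
    rw [hfe]
    have hsplit : (allW β m).filter (fun w => M.evalFrom M.start w ∈ M.accept)
        = (Finset.univ.filter (· ∈ M.accept)).biUnion
            (fun t => (allW β m).filter (fun w => M.evalFrom M.start w = t)) := by
      ext w
      simp only [Finset.mem_filter, Finset.mem_biUnion, Finset.mem_univ, true_and]
      constructor
      · rintro ⟨hw, hacc⟩
        exact ⟨M.evalFrom M.start w, hacc, hw, rfl⟩
      · rintro ⟨t, hacc, hw, rfl⟩
        exact ⟨hw, hacc⟩
    rw [hsplit, Finset.card_biUnion]
    · rw [Nat.cast_sum, Finset.sum_filter]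
    · intro x _ y _ hxy
      simp only [Finset.disjoint_left, Finset.mem_filter]
      rintro w ⟨_, rfl⟩ ⟨_, h2⟩
      exact hxy h2
  have key : (countFn L' (n + p) : ZMod 2) = (countFn L' n : ZMod 2) := by
    rw [hexp, hexp, hDper]
  have := cast_parity_eq key
  rw [hcount, hcount] at this
  exact this

end periodic

section langs

/-- Balanced words: equally many `0`s and `1`s. -/
def bal (w : List (Fin 2)) : Prop := w.count 0 = w.count 1

instance : DecidablePred bal := fun w => inferInstanceAs (Decidable (_ = _))

/-- The context-free language: balanced words starting with `0`,
together with unbalanced words starting with `1`. -/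
def Lang : Set (List (Fin 2)) :=
  {w | (w.head? = some 0 ∧ bal w) ∨ (w.head? = some 1 ∧ ¬ bal w)}

/-- The regular language: the empty word and words starting with `0`. -/
def Rlang : Set (List (Fin 2)) := {w | w = [] ∨ w.head? = some 0}

/-- Witness for counting-regularity of `Lang`: words starting with `0`. -/
def Wlang : Set (List (Fin 2)) := {w | w.head? = some 0}

lemma not_bal_odd {w : List (Fin 2)} (h : w.length % 2 = 1) : ¬ bal w := by
  intro hb
  have := count01_length w
  unfold bal at hb
  omega

lemma card_head0 (n : ℕ) :
    ((allW (Fin 2) (n+1)).filter (fun w => w.head? = some 0)).card = 2^n := by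
  rw [card_filter_allW_succ, Fin.sum_univ_two]
  have e0 : ((allW (Fin 2) n).filter (fun w => ((0:Fin 2) :: w).head? = some 0)) = allW (Fin 2) n := by
    apply Finset.filter_true_of_mem; intro w _; rfl
  have e1 : ((allW (Fin 2) n).filter (fun w => ((1:Fin 2) :: w).head? = some 0)) = ∅ := by
    apply Finset.filter_false_of_mem; intro w _ h; simp at h
  rw [e0, e1, card_allW]
  simp

lemma card_head1 (n : ℕ) :
    ((allW (Fin 2) (n+1)).filter (fun w => w.head? = some 1)).card = 2^n := by
  rw [card_filter_allW_succ, Fin.sum_univ_two]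
  have e1 : ((allW (Fin 2) n).filter (fun w => ((1:Fin 2) :: w).head? = some 1)) = allW (Fin 2) n := by
    apply Finset.filter_true_of_mem; intro w _; rfl
  have e0 : ((allW (Fin 2) n).filter (fun w => ((0:Fin 2) :: w).head? = some 1)) = ∅ := by
    apply Finset.filter_false_of_mem; intro w _ h; simp at h
  rw [e0, e1, card_allW]
  simp

lemma card_head0_bal (m : ℕ) :
    ((allW (Fin 2) (2*m+2)).filter (fun w => w.head? = some 0 ∧ bal w)).card
      = Nat.choose (2*m+1) (m+1) := by
  rw [show 2*m+2 = (2*m+1)+1 by omega, card_filter_allW_succ, Fin.sum_univ_two]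
  have e1 : ((allW (Fin 2) (2*m+1)).filter
      (fun w => ((1:Fin 2) :: w).head? = some 0 ∧ bal ((1:Fin 2) :: w))) = ∅ := by
    apply Finset.filter_false_of_mem; rintro w _ ⟨h, _⟩; simp at h
  have e0 : ((allW (Fin 2) (2*m+1)).filter
      (fun w => ((0:Fin 2) :: w).head? = some 0 ∧ bal ((0:Fin 2) :: w)))
      = ((allW (Fin 2) (2*m+1)).filter (fun w => w.count 1 = m+1)) := by
    apply Finset.filter_congr
    intro w hw
    rw [mem_allW] at hw
    have hc := count01_length w
    unfold bal
    simp only [List.count_cons, List.head?]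
    norm_num
    omega
  rw [e0, e1, card_ones]
  simp

lemma card_head1_bal (m : ℕ) :
    ((allW (Fin 2) (2*m+2)).filter (fun w => w.head? = some 1 ∧ bal w)).card
      = Nat.choose (2*m+1) (m+1) := by
  rw [show 2*m+2 = (2*m+1)+1 by omega, card_filter_allW_succ, Fin.sum_univ_two]
  have e0 : ((allW (Fin 2) (2*m+1)).filter
      (fun w => ((0:Fin 2) :: w).head? = some 1 ∧ bal ((0:Fin 2) :: w))) = ∅ := by
    apply Finset.filter_false_of_mem; rintro w _ ⟨h, _⟩; simp at h
  have e1 : ((allW (Fin 2) (2*m+1)).filter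
      (fun w => ((1:Fin 2) :: w).head? = some 1 ∧ bal ((1:Fin 2) :: w)))
      = ((allW (Fin 2) (2*m+1)).filter (fun w => w.count 1 = m)) := by
    apply Finset.filter_congr
    intro w hw
    rw [mem_allW] at hw
    have hc := count01_length w
    unfold bal
    simp only [List.count_cons, List.head?]
    norm_num
    omega
  rw [e0, e1, card_ones]
  have := Nat.choose_symm (n := 2*m+1) (k := m) (by omega)
  rw [show 2*m+1-m = m+1 by omega] at this
  simp [this]

lemma card_split_bal (n : ℕ) (P : List (Fin 2) → Prop) [DecidablePred P] :
    ((allW (Fin 2) n).filter (fun w => P w ∧ bal w)).card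
      + ((allW (Fin 2) n).filter (fun w => P w ∧ ¬ bal w)).card
      = ((allW (Fin 2) n).filter P).card := by
  rw [← Finset.filter_filter, ← Finset.filter_filter]
  exact Finset.card_filter_add_card_filter_not (fun w => bal w)

end langs

section countcomp

instance : DecidablePred (· ∈ Lang) := fun w =>
  inferInstanceAs (Decidable ((w.head? = some 0 ∧ bal w) ∨ (w.head? = some 1 ∧ ¬ bal w)))
instance : DecidablePred (· ∈ Rlang) := fun w =>
  inferInstanceAs (Decidable (w = [] ∨ w.head? = some 0))
instance : DecidablePred (· ∈ Wlang) := fun w =>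
  inferInstanceAs (Decidable (w.head? = some 0))

lemma headbal_eq (n : ℕ) :
    ((allW (Fin 2) (n+1)).filter (fun w => w.head? = some 0 ∧ bal w)).card
      = ((allW (Fin 2) (n+1)).filter (fun w => w.head? = some 1 ∧ bal w)).card := by
  rcases Nat.even_or_odd n with ⟨m, hm⟩ | ⟨m, hm⟩
  · -- n+1 odd : both sides are 0
    have h0 : ∀ P : List (Fin 2) → Prop, ∀ _ : DecidablePred P,
        ((allW (Fin 2) (n+1)).filter (fun w => P w ∧ bal w)) = ∅ := by
      intro P _
      apply Finset.filter_false_of_mem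
      intro w hw ⟨_, hb⟩
      rw [mem_allW] at hw
      exact not_bal_odd (by omega) hb
    rw [h0 _ inferInstance, h0 _ inferInstance]
  · have hn : n + 1 = 2*m+2 := by omega
    rw [hn, card_head0_bal, card_head1_bal]

lemma countFn_Lang_zero : countFn Lang 0 = 0 := by
  rw [countFn_eq_card]
  rw [show allW (Fin 2) 0 = {[]} from rfl, Finset.filter_singleton]
  have : ([] : List (Fin 2)) ∉ Lang := by
    intro h
    rcases h with ⟨h, _⟩ | ⟨h, _⟩ <;> simp at h
  simp [this]

lemma countFn_Lang_succ (n : ℕ) : countFn Lang (n+1) = 2^n := by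
  rw [countFn_eq_card]
  have hsplit : ((allW (Fin 2) (n+1)).filter (· ∈ Lang)).card
      = ((allW (Fin 2) (n+1)).filter (fun w => w.head? = some 0 ∧ bal w)).card
        + ((allW (Fin 2) (n+1)).filter (fun w => w.head? = some 1 ∧ ¬ bal w)).card := by
    have he : (allW (Fin 2) (n+1)).filter (· ∈ Lang)
        = ((allW (Fin 2) (n+1)).filter (fun w => w.head? = some 0 ∧ bal w))
          ∪ ((allW (Fin 2) (n+1)).filter (fun w => w.head? = some 1 ∧ ¬ bal w)) := by
      ext w
      simp only [Finset.mem_filter, Finset.mem_union]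
      constructor
      · rintro ⟨hw, h | h⟩
        · exact Or.inl ⟨hw, h⟩
        · exact Or.inr ⟨hw, h⟩
      · rintro (⟨hw, h⟩ | ⟨hw, h⟩)
        · exact ⟨hw, Or.inl h⟩
        · exact ⟨hw, Or.inr h⟩
    rw [he, Finset.card_union_of_disjoint]
    simp only [Finset.disjoint_left, Finset.mem_filter]
    rintro w ⟨_, h0, _⟩ ⟨_, h1, _⟩
    rw [h0] at h1
    simp at h1
  rw [hsplit, headbal_eq]
  have h1 := card_split_bal (n+1) (fun w => w.head? = some 1)
  rw [card_head1] at h1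
  omega

lemma countFn_Wlang_zero : countFn Wlang 0 = 0 := by
  rw [countFn_eq_card]
  rw [show allW (Fin 2) 0 = {[]} from rfl, Finset.filter_singleton]
  have : ([] : List (Fin 2)) ∉ Wlang := by intro h; simp [Wlang, Set.mem_setOf_eq] at h
  simp [this]

lemma countFn_Wlang_succ (n : ℕ) : countFn Wlang (n+1) = 2^n := by
  rw [countFn_eq_card]
  rw [show ((allW (Fin 2) (n+1)).filter (· ∈ Wlang))
      = ((allW (Fin 2) (n+1)).filter (fun w => w.head? = some 0)) from rfl]
  exact card_head0 n

-- Intersection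
instance : DecidablePred (· ∈ Lang ∩ Rlang) := fun w =>
  inferInstanceAs (Decidable (w ∈ Lang ∧ w ∈ Rlang))

lemma mem_inter_iff (w : List (Fin 2)) :
    w ∈ Lang ∩ Rlang ↔ (w.head? = some 0 ∧ bal w) := by
  constructor
  · rintro ⟨hL, hR⟩
    rcases hL with ⟨h0, hb⟩ | ⟨h1, hb⟩
    · exact ⟨h0, hb⟩
    · rcases hR with rfl | h0
      · simp at h1
      · rw [h0] at h1; simp at h1
  · rintro ⟨h0, hb⟩
    exact ⟨Or.inl ⟨h0, hb⟩, Or.inr h0⟩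

lemma countFn_inter_even (m : ℕ) :
    countFn (Lang ∩ Rlang) (2*m+2) = Nat.choose (2*m+1) (m+1) := by
  rw [countFn_eq_card]
  rw [Finset.filter_congr (fun w _ => by
    simp only [mem_inter_iff] : ∀ w ∈ allW (Fin 2) (2*m+2),
      (w ∈ Lang ∩ Rlang) ↔ (w.head? = some 0 ∧ bal w))]
  exact card_head0_bal m

lemma countFn_inter_odd (m : ℕ) : countFn (Lang ∩ Rlang) (2*m+1) = 0 := by
  rw [countFn_eq_card, Finset.card_eq_zero]
  apply Finset.filter_false_of_mem
  intro w hw hmem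
  rw [mem_allW] at hw
  obtain ⟨_, hb⟩ := (mem_inter_iff w).mp hmem
  exact not_bal_odd (by omega) hb

-- Union
instance : DecidablePred (· ∈ Lang ∪ Rlang) := fun w =>
  inferInstanceAs (Decidable (w ∈ Lang ∨ w ∈ Rlang))

lemma mem_union_iff (w : List (Fin 2)) :
    w ∈ Lang ∪ Rlang ↔ (w = [] ∨ w.head? = some 0 ∨ (w.head? = some 1 ∧ ¬ bal w)) := by
  constructor
  · rintro ((⟨h0, _⟩ | ⟨h1, hb⟩) | h)
    · exact Or.inr (Or.inl h0)
    · exact Or.inr (Or.inr ⟨h1, hb⟩)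
    · rcases h with rfl | h0
      · exact Or.inl rfl
      · exact Or.inr (Or.inl h0)
  · rintro (rfl | h0 | ⟨h1, hb⟩)
    · exact Or.inr (Or.inl rfl)
    · exact Or.inr (Or.inr h0)
    · exact Or.inl (Or.inr ⟨h1, hb⟩)

lemma countFn_union_succ (n : ℕ) :
    countFn (Lang ∪ Rlang) (n+1)
      = 2^n + (2^n - ((allW (Fin 2) (n+1)).filter (fun w => w.head? = some 1 ∧ bal w)).card) := by
  rw [countFn_eq_card]
  have he : (allW (Fin 2) (n+1)).filter (· ∈ Lang ∪ Rlang)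
      = ((allW (Fin 2) (n+1)).filter (fun w => w.head? = some 0))
        ∪ ((allW (Fin 2) (n+1)).filter (fun w => w.head? = some 1 ∧ ¬ bal w)) := by
    ext w
    simp only [Finset.mem_filter, Finset.mem_union]
    constructor
    · rintro ⟨hw, hmem⟩
      rcases (mem_union_iff w).mp hmem with rfl | h0 | h1
      · rw [mem_allW] at hw; simp at hw
      · exact Or.inl ⟨hw, h0⟩
      · exact Or.inr ⟨hw, h1⟩
    · rintro (⟨hw, h0⟩ | ⟨hw, h1⟩)
      · exact ⟨hw, (mem_union_iff w).mpr (Or.inr (Or.inl h0))⟩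
      · exact ⟨hw, (mem_union_iff w).mpr (Or.inr (Or.inr h1))⟩
  rw [he, Finset.card_union_of_disjoint]
  · have h1 := card_split_bal (n+1) (fun w => w.head? = some 1)
    rw [card_head1] at h1
    rw [card_head0]
    omega
  · simp only [Finset.disjoint_left, Finset.mem_filter]
    rintro w ⟨_, h0⟩ ⟨_, h1, _⟩
    rw [h0] at h1
    simp at h1

lemma countFn_union_even_parity (m : ℕ) :
    countFn (Lang ∪ Rlang) (2*m+2) % 2 = Nat.choose (2*m+1) (m+1) % 2 := by
  have := countFn_union_succ (2*m+1)
  rw [show (2*m+1)+1 = 2*m+2 by omega] at this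
  rw [card_head1_bal] at this
  have hle : Nat.choose (2*m+1) (m+1) ≤ 2^(2*m+1) := by
    have h1 := card_split_bal (2*m+2) (fun w => w.head? = some 1)
    rw [show 2*m+2 = (2*m+1)+1 by omega] at h1
    rw [card_head1, card_head1_bal] at h1
    omega
  have h2 : (2:ℕ)^(2*m+1) % 2 = 0 := by
    have : (2:ℕ)^(2*m+1) = 2 * 2^(2*m) := by ring
    omega
  omega

lemma countFn_union_odd_parity (m : ℕ) : countFn (Lang ∪ Rlang) (2*m+1) % 2 = 0 := by
  rcases Nat.eq_zero_or_pos m with rfl | hm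
  · have := countFn_union_succ 0
    norm_num at this
    have hb : ((allW (Fin 2) 1).filter (fun w => w.head? = some 1 ∧ bal w)).card = 0 := by
      rw [Finset.card_eq_zero]
      apply Finset.filter_false_of_mem
      intro w hw ⟨_, hbal⟩
      rw [mem_allW] at hw
      exact not_bal_odd (by omega) hbal
    rw [show (2*0+1) = 0+1 by omega, countFn_union_succ 0, hb]
    norm_num
  · obtain ⟨j, rfl⟩ : ∃ j, m = j + 1 := ⟨m - 1, by omega⟩
    have heq : 2*(j+1)+1 = (2*j+2)+1 := by omega
    rw [heq, countFn_union_succ]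
    have hb : ((allW (Fin 2) ((2*j+2)+1)).filter (fun w => w.head? = some 1 ∧ bal w)).card = 0 := by
      rw [Finset.card_eq_zero]
      apply Finset.filter_false_of_mem
      intro w hw ⟨_, hbal⟩
      rw [mem_allW] at hw
      exact not_bal_odd (by omega) hbal
    rw [hb]
    have : (2:ℕ)^(2*j+2) % 2 = 0 := by
      have : (2:ℕ)^(2*j+2) = 2 * 2^(2*j+1) := by ring
      omega
    omega

end countcomp

section dfas

def dstep : Fin 3 → Fin 2 → Fin 3 := fun s a => if s = 0 then (if a = 0 then 1 else 2) else s

lemma dstay (v : List (Fin 2)) (s : Fin 3) (hs : s ≠ 0) : List.foldl dstep s v = s := by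
  induction v with
  | nil => rfl
  | cons a t ih =>
    have : dstep s a = s := by simp [dstep, hs]
    simp [List.foldl_cons, this, ih]

lemma fin2_cases (a : Fin 2) : a = 0 ∨ a = 1 := by omega

def M1 : DFA (Fin 2) (Fin 3) := ⟨dstep, 0, {1}⟩
def M2 : DFA (Fin 2) (Fin 3) := ⟨dstep, 0, {0, 1}⟩

lemma evalFrom_eq_foldl (M : DFA (Fin 2) (Fin 3)) (s : Fin 3) (w : List (Fin 2)) :
    M.evalFrom s w = List.foldl M.step s w := rfl

lemma reg_W : IsRegularLang Wlang := by
  refine ⟨Fin 3, inferInstance, M1, fun w => ?_⟩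
  rw [DFA.mem_accepts]
  show List.foldl dstep 0 w ∈ ({1} : Set (Fin 3)) ↔ w ∈ Wlang
  rw [Set.mem_singleton_iff]
  cases w with
  | nil =>
    simp only [List.foldl_nil]
    constructor
    · intro h; exact absurd h (by decide)
    · intro h; exact absurd h (by simp [Wlang, Set.mem_setOf_eq])
  | cons a v =>
    rw [List.foldl_cons]
    rcases fin2_cases a with rfl | rfl
    · have : dstep 0 0 = 1 := by decide
      rw [this, dstay v 1 (by decide)]
      simp [Wlang, Set.mem_setOf_eq]
    · have : dstep 0 1 = 2 := by decide
      rw [this, dstay v 2 (by decide)]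
      constructor
      · intro h; exact absurd h (by decide)
      · intro h; simp [Wlang, Set.mem_setOf_eq] at h

lemma reg_R : IsRegularLang Rlang := by
  refine ⟨Fin 3, inferInstance, M2, fun w => ?_⟩
  rw [DFA.mem_accepts]
  show List.foldl dstep 0 w ∈ ({0, 1} : Set (Fin 3)) ↔ w ∈ Rlang
  cases w with
  | nil =>
    simp only [List.foldl_nil]
    constructor
    · intro _; exact Or.inl rfl
    · intro _; exact Or.inl rfl
  | cons a v =>
    rw [List.foldl_cons]
    rcases fin2_cases a with rfl | rfl
    · have : dstep 0 0 = 1 := by decide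
      rw [this, dstay v 1 (by decide)]
      constructor
      · intro _; exact Or.inr rfl
      · intro _; exact Or.inr rfl
    · have : dstep 0 1 = 2 := by decide
      rw [this, dstay v 2 (by decide)]
      constructor
      · intro h; rcases h with h | h <;> exact absurd h (by decide)
      · intro h
        rcases h with h | h
        · simp at h
        · simp at h

lemma countingRegular_Lang : CountingRegular Lang := by
  refine ⟨Fin 2, inferInstance, Wlang, reg_W, fun n => ?_⟩
  cases n with
  | zero => rw [countFn_Wlang_zero, countFn_Lang_zero]
  | succ n => rw [countFn_Wlang_succ, countFn_Lang_succ]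

end dfas

section contra

lemma main_contra {K : Set (List (Fin 2))}
    (heven : ∀ m, countFn K (2*m+2) % 2 = Nat.choose (2*m+1) (m+1) % 2)
    (hodd : ∀ m, countFn K (2*m+1) % 2 = 0) : ¬ CountingRegular K := by
  intro hc
  obtain ⟨N, p, hp, hper⟩ := countingRegular_parity hc
  obtain ⟨k, hk⟩ : ∃ k, N + p < 2^k := ⟨N + p, Nat.lt_two_pow_self⟩
  set m : ℕ := 2^k - 1 with hm
  have hm1 : m + 1 = 2^k := by
    have : 1 ≤ 2^k := Nat.one_le_two_pow
    omega
  have hn : 2*m+2 = 2^(k+1) := by rw [pow_succ]; omega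
  have hfn : countFn K (2*m+2) % 2 = 1 := by
    rw [heven m]
    exact (odd_choose_iff m).mpr ⟨k, hm1⟩
  have hNle : N ≤ 2*m+2 := by omega
  have hpn := hper (2*m+2) hNle
  rcases Nat.even_or_odd p with ⟨q, hq⟩ | ⟨q, hq⟩
  · -- p even, p = 2q with q ≥ 1
    have hq1 : 1 ≤ q := by omega
    have hform : 2*m+2+p = 2*(m+q)+2 := by omega
    have hchoose : Nat.choose (2*(m+q)+1) ((m+q)+1) % 2 = 0 := by
      rcases Nat.mod_two_eq_zero_or_one (Nat.choose (2*(m+q)+1) ((m+q)+1)) with h | h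
      · exact h
      · exfalso
        obtain ⟨j, hj⟩ := (odd_choose_iff (m+q)).mp h
        -- 2^k < 2^j < 2^(k+1)
        have hlow : 2^k < 2^j := by omega
        have hhigh : (2:ℕ)^j < 2^(k+1) := by
          rw [pow_succ]; omega
        have hjk : k < j := by
          by_contra hh
          have : (2:ℕ)^j ≤ 2^k := Nat.pow_le_pow_right (by norm_num) (by omega)
          omega
        have hjk2 : j < k + 1 := by
          by_contra hh
          have : (2:ℕ)^(k+1) ≤ 2^j := Nat.pow_le_pow_right (by norm_num) (by omega)
          omega
        omega
    have := heven (m+q)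
    rw [← hform] at this
    omega
  · -- p odd
    have hform : 2*m+2+p = 2*(m+q+1)+1 := by omega
    have := hodd (m+q+1)
    rw [← hform] at this
    omega

lemma not_cr_inter : ¬ CountingRegular (Lang ∩ Rlang) := by
  apply main_contra
  · intro m; rw [countFn_inter_even]
  · intro m; rw [countFn_inter_odd]

lemma not_cr_union : ¬ CountingRegular (Lang ∪ Rlang) := by
  apply main_contra
  · exact countFn_union_even_parity
  · exact countFn_union_odd_parity

end contra

section grammar

open Symbol

abbrev GSym : Type := Symbol (Fin 2) (Fin 4)

instance : DecidableEq (ContextFreeRule (Fin 2) (Fin 4)) := fun a b =>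
  decidable_of_iff (a.input = b.input ∧ a.output = b.output)
    (ContextFreeRule.ext_iff).symm

-- nonterminals: 0 = S, 1 = E, 2 = A (more 0s), 3 = B (more 1s)
def t0 : GSym := terminal 0
def t1 : GSym := terminal 1
def nS : GSym := nonterminal 0
def nE : GSym := nonterminal 1
def nA : GSym := nonterminal 2
def nB : GSym := nonterminal 3

def ruleList : List (ContextFreeRule (Fin 2) (Fin 4)) :=
  [ ⟨0, [t0, nE, t1, nE]⟩,
    ⟨0, [t1, nE]⟩,
    ⟨0, [t1, nB]⟩,
    ⟨0, [t1, nE, t0, nA]⟩,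
    ⟨1, []⟩,
    ⟨1, [t0, nE, t1, nE]⟩,
    ⟨1, [t1, nE, t0, nE]⟩,
    ⟨2, [nE, t0, nA]⟩,
    ⟨2, [nE, t0, nE]⟩,
    ⟨3, [nE, t1, nB]⟩,
    ⟨3, [nE, t1, nE]⟩ ]

abbrev G : ContextFreeGrammar (Fin 2) := ⟨Fin 4, 0, ruleList.toFinset⟩


/-- Interpretation of each nonterminal. -/
def cls : Fin 4 → Set (List (Fin 2)) := fun X =>
  if X = 0 then Lang
  else if X = 1 then {w | bal w}
  else if X = 2 then {w | w.count 1 < w.count 0}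
  else {w | w.count 0 < w.count 1}

lemma cls_0 : cls 0 = Lang := rfl
lemma cls_1 : cls 1 = {w | bal w} := rfl
lemma cls_2 : cls 2 = {w | w.count 1 < w.count 0} := rfl
lemma cls_3 : cls 3 = {w | w.count 0 < w.count 1} := rfl

/-- All words obtainable from a sentential form by substituting arbitrary members
of each nonterminal's class. -/
def SubW : List GSym → Set (List (Fin 2))
  | [] => {[]}
  | Symbol.terminal a :: t => {w | ∃ v ∈ SubW t, w = a :: v}
  | Symbol.nonterminal X :: t => {w | ∃ u ∈ cls X, ∃ v ∈ SubW t, w = u ++ v}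

lemma SubW_append (x y : List GSym) :
    SubW (x ++ y) = {w | ∃ u ∈ SubW x, ∃ v ∈ SubW y, w = u ++ v} := by
  induction x with
  | nil =>
    ext w
    simp only [List.nil_append, Set.mem_setOf_eq]
    constructor
    · intro hw; exact ⟨[], rfl, w, hw, rfl⟩
    · rintro ⟨u, hu, v, hv, rfl⟩
      have : u = [] := hu
      subst this
      exact hv
  | cons a t ih =>
    have ihm : ∀ z, z ∈ SubW (t ++ y) ↔ ∃ u ∈ SubW t, ∃ v ∈ SubW y, z = u ++ v :=
      fun z => by rw [Set.ext_iff] at ih; exact ih z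
    cases a with
    | terminal c =>
      ext w
      show w ∈ SubW (Symbol.terminal c :: (t ++ y)) ↔ _
      simp only [SubW, Set.mem_setOf_eq]
      constructor
      · rintro ⟨v, hv, rfl⟩
        obtain ⟨u', hu', v', hv', rfl⟩ := (ihm v).mp hv
        exact ⟨c :: u', ⟨u', hu', rfl⟩, v', hv', rfl⟩
      · rintro ⟨u, ⟨v', hv', rfl⟩, v, hv, rfl⟩
        exact ⟨v' ++ v, (ihm _).mpr ⟨v', hv', v, hv, rfl⟩, rfl⟩
    | nonterminal X =>
      ext w
      show w ∈ SubW (Symbol.nonterminal X :: (t ++ y)) ↔ _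
      simp only [SubW, Set.mem_setOf_eq]
      constructor
      · rintro ⟨u, hu, v, hv, rfl⟩
        obtain ⟨u', hu', v', hv', rfl⟩ := (ihm v).mp hv
        exact ⟨u ++ u', ⟨u, hu, u', hu', rfl⟩, v', hv', by rw [List.append_assoc]⟩
      · rintro ⟨uu, ⟨u, hu, u', hu', rfl⟩, v, hv, rfl⟩
        exact ⟨u, hu, u' ++ v, (ihm _).mpr ⟨u', hu', v, hv, rfl⟩, by rw [List.append_assoc]⟩

lemma SubW_terminals (w : List (Fin 2)) : SubW (w.map Symbol.terminal) = {w} := by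
  induction w with
  | nil => rfl
  | cons a t ih =>
    ext v
    simp only [List.map_cons, SubW, ih, Set.mem_setOf_eq]
    constructor
    · rintro ⟨v', hv', rfl⟩
      have : v' = t := hv'
      subst this; rfl
    · rintro rfl
      exact ⟨t, rfl, rfl⟩


lemma mem_SubW_term {a : Fin 2} {t : List GSym} {w : List (Fin 2)} :
    w ∈ SubW (Symbol.terminal a :: t) ↔ ∃ v ∈ SubW t, w = a :: v := Iff.rfl

lemma mem_SubW_nt {X : Fin 4} {t : List GSym} {w : List (Fin 2)} :
    w ∈ SubW (Symbol.nonterminal X :: t) ↔ ∃ u ∈ cls X, ∃ v ∈ SubW t, w = u ++ v := Iff.rfl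

lemma mem_SubW_nil {w : List (Fin 2)} : w ∈ SubW [] ↔ w = [] := Iff.rfl

lemma mem_SubW_single_nt {X : Fin 4} {w : List (Fin 2)} :
    w ∈ SubW [Symbol.nonterminal X] ↔ w ∈ cls X := by
  rw [mem_SubW_nt]
  constructor
  · rintro ⟨u, hu, v, hv, rfl⟩
    rw [mem_SubW_nil] at hv
    subst hv
    rw [List.append_nil]
    exact hu
  · intro hw
    exact ⟨w, hw, [], rfl, (List.append_nil w).symm⟩


lemma count_cons0 (v : List (Fin 2)) :
    ((0 : Fin 2) :: v).count 0 = v.count 0 + 1 ∧ ((0 : Fin 2) :: v).count 1 = v.count 1 := by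
  constructor <;> simp [List.count_cons]

lemma count_cons1 (v : List (Fin 2)) :
    ((1 : Fin 2) :: v).count 0 = v.count 0 ∧ ((1 : Fin 2) :: v).count 1 = v.count 1 + 1 := by
  constructor <;> simp [List.count_cons]

lemma rule_sound : ∀ r ∈ ruleList, SubW r.output ⊆ cls r.input := by
  intro r hr w hw
  simp only [ruleList, List.mem_cons, List.not_mem_nil, or_false] at hr
  rcases hr with rfl|rfl|rfl|rfl|rfl|rfl|rfl|rfl|rfl|rfl|rfl
  -- S → 0 E 1 E
  · obtain ⟨v, hv, rfl⟩ := mem_SubW_term.mp hw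
    obtain ⟨u, hu, v', hv', rfl⟩ := mem_SubW_nt.mp hv
    obtain ⟨v2, hv2, rfl⟩ := mem_SubW_term.mp hv'
    obtain ⟨u2, hu2, v3, hv3, rfl⟩ := mem_SubW_nt.mp hv2
    rw [mem_SubW_nil] at hv3; subst hv3
    rw [cls_1, Set.mem_setOf_eq] at hu hu2
    rw [show (0 : Fin 4) = 0 from rfl, cls_0]
    refine Or.inl ⟨rfl, ?_⟩
    unfold bal at hu hu2 ⊢
    simp [List.count_cons, List.count_append]
    omega
  -- S → 1 E
  · obtain ⟨v, hv, rfl⟩ := mem_SubW_term.mp hw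
    obtain ⟨u, hu, v', hv', rfl⟩ := mem_SubW_nt.mp hv
    rw [mem_SubW_nil] at hv'; subst hv'
    rw [cls_1, Set.mem_setOf_eq] at hu
    rw [cls_0]
    refine Or.inr ⟨rfl, ?_⟩
    unfold bal at hu ⊢
    simp [List.count_cons, List.count_append]
    omega
  -- S → 1 B
  · obtain ⟨v, hv, rfl⟩ := mem_SubW_term.mp hw
    obtain ⟨u, hu, v', hv', rfl⟩ := mem_SubW_nt.mp hv
    rw [mem_SubW_nil] at hv'; subst hv'
    rw [cls_3, Set.mem_setOf_eq] at hu
    rw [cls_0]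
    refine Or.inr ⟨rfl, ?_⟩
    unfold bal
    simp [List.count_cons, List.count_append]
    omega
  -- S → 1 E 0 A
  · obtain ⟨v, hv, rfl⟩ := mem_SubW_term.mp hw
    obtain ⟨u, hu, v', hv', rfl⟩ := mem_SubW_nt.mp hv
    obtain ⟨v2, hv2, rfl⟩ := mem_SubW_term.mp hv'
    obtain ⟨u2, hu2, v3, hv3, rfl⟩ := mem_SubW_nt.mp hv2
    rw [mem_SubW_nil] at hv3; subst hv3
    rw [cls_1, Set.mem_setOf_eq] at hu
    rw [cls_2, Set.mem_setOf_eq] at hu2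
    rw [cls_0]
    refine Or.inr ⟨rfl, ?_⟩
    unfold bal at hu ⊢
    simp [List.count_cons, List.count_append]
    omega
  -- E → ε
  · rw [mem_SubW_nil] at hw; subst hw
    rw [cls_1]
    exact rfl
  -- E → 0 E 1 E
  · obtain ⟨v, hv, rfl⟩ := mem_SubW_term.mp hw
    obtain ⟨u, hu, v', hv', rfl⟩ := mem_SubW_nt.mp hv
    obtain ⟨v2, hv2, rfl⟩ := mem_SubW_term.mp hv'
    obtain ⟨u2, hu2, v3, hv3, rfl⟩ := mem_SubW_nt.mp hv2
    rw [mem_SubW_nil] at hv3; subst hv3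
    rw [cls_1, Set.mem_setOf_eq] at hu hu2
    rw [cls_1, Set.mem_setOf_eq]
    unfold bal at hu hu2 ⊢
    simp [List.count_cons, List.count_append]
    omega
  -- E → 1 E 0 E
  · obtain ⟨v, hv, rfl⟩ := mem_SubW_term.mp hw
    obtain ⟨u, hu, v', hv', rfl⟩ := mem_SubW_nt.mp hv
    obtain ⟨v2, hv2, rfl⟩ := mem_SubW_term.mp hv'
    obtain ⟨u2, hu2, v3, hv3, rfl⟩ := mem_SubW_nt.mp hv2
    rw [mem_SubW_nil] at hv3; subst hv3
    rw [cls_1, Set.mem_setOf_eq] at hu hu2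
    rw [cls_1, Set.mem_setOf_eq]
    unfold bal at hu hu2 ⊢
    simp [List.count_cons, List.count_append]
    omega
  -- A → E 0 A
  · obtain ⟨u, hu, v, hv, rfl⟩ := mem_SubW_nt.mp hw
    obtain ⟨v2, hv2, rfl⟩ := mem_SubW_term.mp hv
    obtain ⟨u2, hu2, v3, hv3, rfl⟩ := mem_SubW_nt.mp hv2
    rw [mem_SubW_nil] at hv3; subst hv3
    rw [cls_1, Set.mem_setOf_eq] at hu
    rw [cls_2, Set.mem_setOf_eq] at hu2
    rw [cls_2, Set.mem_setOf_eq]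
    unfold bal at hu
    simp [List.count_cons, List.count_append]
    omega
  -- A → E 0 E
  · obtain ⟨u, hu, v, hv, rfl⟩ := mem_SubW_nt.mp hw
    obtain ⟨v2, hv2, rfl⟩ := mem_SubW_term.mp hv
    obtain ⟨u2, hu2, v3, hv3, rfl⟩ := mem_SubW_nt.mp hv2
    rw [mem_SubW_nil] at hv3; subst hv3
    rw [cls_1, Set.mem_setOf_eq] at hu hu2
    rw [cls_2, Set.mem_setOf_eq]
    unfold bal at hu hu2
    simp [List.count_cons, List.count_append]
    omega
  -- B → E 1 B
  · obtain ⟨u, hu, v, hv, rfl⟩ := mem_SubW_nt.mp hw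
    obtain ⟨v2, hv2, rfl⟩ := mem_SubW_term.mp hv
    obtain ⟨u2, hu2, v3, hv3, rfl⟩ := mem_SubW_nt.mp hv2
    rw [mem_SubW_nil] at hv3; subst hv3
    rw [cls_1, Set.mem_setOf_eq] at hu
    rw [cls_3, Set.mem_setOf_eq] at hu2
    rw [cls_3, Set.mem_setOf_eq]
    unfold bal at hu
    simp [List.count_cons, List.count_append]
    omega
  -- B → E 1 E
  · obtain ⟨u, hu, v, hv, rfl⟩ := mem_SubW_nt.mp hw
    obtain ⟨v2, hv2, rfl⟩ := mem_SubW_term.mp hv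
    obtain ⟨u2, hu2, v3, hv3, rfl⟩ := mem_SubW_nt.mp hv2
    rw [mem_SubW_nil] at hv3; subst hv3
    rw [cls_1, Set.mem_setOf_eq] at hu hu2
    rw [cls_3, Set.mem_setOf_eq]
    unfold bal at hu hu2
    simp [List.count_cons, List.count_append]
    omega


lemma produces_sound {u v : List GSym} (h : G.Produces u v) : SubW v ⊆ SubW u := by
  obtain ⟨r, hrm, hrw⟩ := h
  obtain ⟨p, q, rfl, rfl⟩ := hrw.exists_parts
  have hrs : SubW r.output ⊆ cls r.input := rule_sound r (List.mem_toFinset.mp hrm)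
  intro w hw
  rw [SubW_append, Set.mem_setOf_eq] at hw
  obtain ⟨x, hx, y, hy, rfl⟩ := hw
  rw [SubW_append, Set.mem_setOf_eq] at hx
  obtain ⟨x1, hx1, x2, hx2, rfl⟩ := hx
  rw [SubW_append, Set.mem_setOf_eq]
  refine ⟨x1 ++ x2, ?_, y, hy, by rw [List.append_assoc]⟩
  rw [SubW_append, Set.mem_setOf_eq]
  exact ⟨x1, hx1, x2, mem_SubW_single_nt.mpr (hrs hx2), rfl⟩

lemma derives_sound {u v : List GSym} (h : G.Derives u v) : SubW v ⊆ SubW u := by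
  induction h with
  | refl => exact subset_rfl
  | tail _ hstep ih => exact (produces_sound hstep).trans ih

lemma lang_sound {w : List (Fin 2)} (h : w ∈ G.language) : w ∈ Lang := by
  rw [ContextFreeGrammar.mem_language_iff] at h
  have h2 := derives_sound h
  have h3 : w ∈ SubW (List.map Symbol.terminal w) := by
    rw [SubW_terminals]; rfl
  have h4 := h2 h3
  rw [show [Symbol.nonterminal G.initial] = [Symbol.nonterminal (0 : Fin 4)] from rfl] at h4
  rw [mem_SubW_single_nt, cls_0] at h4
  exact h4


lemma fin2_cases' (a : Fin 2) : a = 0 ∨ a = 1 := by omega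

lemma split_aux : ∀ n : ℕ, ∀ v : List (Fin 2), v.length ≤ n →
    (v.count 0 < v.count 1 → ∃ u t, v = u ++ 1 :: t ∧ u.count 0 = u.count 1) ∧
    (v.count 1 < v.count 0 → ∃ u t, v = u ++ 0 :: t ∧ u.count 0 = u.count 1) := by
  intro n
  induction n with
  | zero =>
    intro v hv
    have : v = [] := List.length_eq_zero_iff.mp (by omega)
    subst this
    constructor <;> (intro h; simp at h)
  | succ n ih =>
    intro v hv
    cases v with
    | nil => constructor <;> (intro h; simp at h)
    | cons a v' =>
      have hv' : v'.length ≤ n := by simp at hv; omega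
      rcases fin2_cases' a with rfl | rfl
      · constructor
        · -- starts with 0, more 1s overall
          intro hlt
          have hc : v'.count 0 + 1 < v'.count 1 := by
            have h1 := (count_cons0 v').1
            have h2 := (count_cons0 v').2
            omega
          obtain ⟨u', t', rfl, hbu'⟩ := (ih v' hv').1 (by omega)
          simp only [List.count_append, List.count_cons, List.length_append,
            List.length_cons] at hc hv'
          norm_num at hc hv'
          obtain ⟨u'', t'', rfl, hbu''⟩ := (ih t' (by omega)).1 (by omega)
          refine ⟨0 :: u' ++ 1 :: u'', t'', by simp, ?_⟩
          simp only [List.count_append, List.count_cons, List.cons_append]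
          norm_num
          omega
        · -- starts with 0, more 0s overall : immediate split
          intro _
          exact ⟨[], v', rfl, rfl⟩
      · constructor
        · intro _
          exact ⟨[], v', rfl, rfl⟩
        · intro hlt
          have hc : v'.count 1 + 1 < v'.count 0 := by
            have h1 := (count_cons1 v').1
            have h2 := (count_cons1 v').2
            omega
          obtain ⟨u', t', rfl, hbu'⟩ := (ih v' hv').2 (by omega)
          simp only [List.count_append, List.count_cons, List.length_append,
            List.length_cons] at hc hv'
          norm_num at hc hv'
          obtain ⟨u'', t'', rfl, hbu''⟩ := (ih t' (by omega)).2 (by omega)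
          refine ⟨1 :: u' ++ 0 :: u'', t'', by simp, ?_⟩
          simp only [List.count_append, List.count_cons, List.cons_append]
          norm_num
          omega


instance : DecidableEq (ContextFreeRule (Fin 2) G.NT) :=
  inferInstanceAs (DecidableEq (ContextFreeRule (Fin 2) (Fin 4)))

lemma prod_rule (r : ContextFreeRule (Fin 2) (Fin 4)) (hr : r ∈ ruleList) :
    G.Produces [Symbol.nonterminal r.input] r.output :=
  ⟨r, List.mem_toFinset.mpr hr, ContextFreeRule.Rewrites.input_output⟩

lemma der_append {x y x' y' : List GSym} (hx : G.Derives x x') (hy : G.Derives y y') :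
    G.Derives (x ++ y) (x' ++ y') :=
  (hx.append_right y).trans (hy.append_left x')

/-- Derivation builder for rules of shape `Z → c X d Y`. -/
lemma der2 {c d : Fin 2} {X Y Z : Fin 4} {u t : List (Fin 2)}
    (hr : (⟨Z, [terminal c, nonterminal X, terminal d, nonterminal Y]⟩ :
      ContextFreeRule (Fin 2) (Fin 4)) ∈ ruleList)
    (du : G.Derives [nonterminal X] (u.map terminal))
    (dt : G.Derives [nonterminal Y] (t.map terminal)) :
    G.Derives [nonterminal Z] ((c :: (u ++ d :: t)).map terminal) := by
  have h1 := (prod_rule _ hr).trans_derives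
    (der_append (ContextFreeGrammar.Derives.refl (g := G) [terminal c])
      (der_append du (der_append (ContextFreeGrammar.Derives.refl (g := G) [terminal d]) dt)))
  have he : List.map (Symbol.terminal (N := Fin 4)) (c :: (u ++ d :: t))
      = [Symbol.terminal c] ++ (List.map (Symbol.terminal (N := Fin 4)) u
        ++ ([Symbol.terminal d] ++ List.map (Symbol.terminal (N := Fin 4)) t)) := by
    simp
  rw [he]
  exact h1

/-- Derivation builder for rules of shape `Z → c X`. -/
lemma der1 {c : Fin 2} {X Z : Fin 4} {u : List (Fin 2)}
    (hr : (⟨Z, [terminal c, nonterminal X]⟩ : ContextFreeRule (Fin 2) (Fin 4)) ∈ ruleList)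
    (du : G.Derives [nonterminal X] (u.map terminal)) :
    G.Derives [nonterminal Z] ((c :: u).map terminal) := by
  have h1 := (prod_rule _ hr).trans_derives
    (der_append (ContextFreeGrammar.Derives.refl (g := G) [terminal c]) du)
  have he : List.map (Symbol.terminal (N := Fin 4)) (c :: u)
      = [Symbol.terminal c] ++ List.map (Symbol.terminal (N := Fin 4)) u := by simp
  rw [he]
  exact h1

/-- Derivation builder for rules of shape `Z → X c Y`. -/
lemma der2m {c : Fin 2} {X Y Z : Fin 4} {u t : List (Fin 2)}
    (hr : (⟨Z, [nonterminal X, terminal c, nonterminal Y]⟩ :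
      ContextFreeRule (Fin 2) (Fin 4)) ∈ ruleList)
    (du : G.Derives [nonterminal X] (u.map terminal))
    (dt : G.Derives [nonterminal Y] (t.map terminal)) :
    G.Derives [nonterminal Z] ((u ++ c :: t).map terminal) := by
  have h1 := (prod_rule _ hr).trans_derives
    (der_append du (der_append (ContextFreeGrammar.Derives.refl (g := G) [terminal c]) dt))
  have he : List.map (Symbol.terminal (N := Fin 4)) (u ++ c :: t)
      = List.map (Symbol.terminal (N := Fin 4)) u
        ++ ([Symbol.terminal c] ++ List.map (Symbol.terminal (N := Fin 4)) t) := by simp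
  rw [he]
  exact h1


lemma fin4_cases' (a : Fin 4) : a = 0 ∨ a = 1 ∨ a = 2 ∨ a = 3 := by omega

lemma der_cls : ∀ n : ℕ, ∀ w : List (Fin 2), w.length ≤ n → ∀ X : Fin 4, w ∈ cls X →
    G.Derives [Symbol.nonterminal X] (w.map Symbol.terminal) := by
  intro n
  induction n with
  | zero =>
    intro w hw X hX
    have hwnil : w = [] := List.length_eq_zero_iff.mp (by omega)
    subst hwnil
    rcases fin4_cases' X with rfl | rfl | rfl | rfl
    · rw [cls_0] at hX
      rcases hX with ⟨h, _⟩ | ⟨h, _⟩ <;> simp at h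
    · simpa using (prod_rule ⟨1, []⟩ (by simp [ruleList, t0, t1, nS, nE, nA, nB])).single
    · rw [cls_2, Set.mem_setOf_eq] at hX; simp at hX
    · rw [cls_3, Set.mem_setOf_eq] at hX; simp at hX
  | succ n ih =>
    intro w hw X hX
    rcases fin4_cases' X with rfl | rfl | rfl | rfl
    · -- X = S
      rw [cls_0] at hX
      rcases hX with ⟨h0, hb⟩ | ⟨h1, hnb⟩
      · -- balanced starting with 0
        cases w with
        | nil => simp at h0
        | cons a v =>
          have ha : a = 0 := by simpa using h0
          subst ha
          unfold bal at hb
          have hca := count_cons0 v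
          have hlen : v.length ≤ n := by simp at hw; omega
          obtain ⟨u, t, rfl, hbu⟩ := (split_aux n v hlen).1 (by omega)
          simp only [List.count_append, List.count_cons, List.length_append,
            List.length_cons] at hb hca hlen
          norm_num at hb hca hlen
          have hbt : t.count 0 = t.count 1 := by omega
          have du := ih u (by omega) 1 (by rw [cls_1]; exact hbu)
          have dt := ih t (by omega) 1 (by rw [cls_1]; exact hbt)
          exact der2 (by simp [ruleList, t0, t1, nS, nE, nA, nB]) du dt
      · -- unbalanced starting with 1
        cases w with
        | nil => simp at h1
        | cons a v =>
          have ha : a = 1 := by simpa using h1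
          subst ha
          unfold bal at hnb
          have hca := count_cons1 v
          have hlen : v.length ≤ n := by simp at hw; omega
          rcases Nat.lt_trichotomy (v.count 0) (v.count 1) with hlt | heq | hgt
          · have dv := ih v hlen 3 (by rw [cls_3]; exact hlt)
            exact der1 (by simp [ruleList, t0, t1, nS, nE, nA, nB]) dv
          · have dv := ih v hlen 1 (by rw [cls_1]; exact heq)
            exact der1 (by simp [ruleList, t0, t1, nS, nE, nA, nB]) dv
          · -- more 0s in v; in fact at least two more
            have hgt2 : v.count 1 + 1 < v.count 0 := by
              rcases Nat.lt_or_ge (v.count 1 + 1) (v.count 0) with h | h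
              · exact h
              · exfalso; apply hnb; omega
            obtain ⟨u, t, rfl, hbu⟩ := (split_aux n v hlen).2 (by omega)
            simp only [List.count_append, List.count_cons, List.length_append,
              List.length_cons] at hgt2 hlen
            norm_num at hgt2 hlen
            have hct : t.count 1 < t.count 0 := by omega
            have du := ih u (by omega) 1 (by rw [cls_1]; exact hbu)
            have dt := ih t (by omega) 2 (by rw [cls_2]; exact hct)
            exact der2 (by simp [ruleList, t0, t1, nS, nE, nA, nB]) du dt
    · -- X = E
      rw [cls_1, Set.mem_setOf_eq] at hX
      unfold bal at hX
      cases w with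
      | nil => simpa using (prod_rule ⟨1, []⟩ (by simp [ruleList, t0, t1, nS, nE, nA, nB])).single
      | cons a v =>
        have hlen : v.length ≤ n := by simp at hw; omega
        rcases fin2_cases' a with rfl | rfl
        · have hca := count_cons0 v
          obtain ⟨u, t, rfl, hbu⟩ := (split_aux n v hlen).1 (by omega)
          simp only [List.count_append, List.count_cons, List.length_append,
            List.length_cons] at hX hca hlen
          norm_num at hX hca hlen
          have hbt : t.count 0 = t.count 1 := by omega
          have du := ih u (by omega) 1 (by rw [cls_1]; exact hbu)
          have dt := ih t (by omega) 1 (by rw [cls_1]; exact hbt)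
          exact der2 (by simp [ruleList, t0, t1, nS, nE, nA, nB]) du dt
        · have hca := count_cons1 v
          obtain ⟨u, t, rfl, hbu⟩ := (split_aux n v hlen).2 (by omega)
          simp only [List.count_append, List.count_cons, List.length_append,
            List.length_cons] at hX hca hlen
          norm_num at hX hca hlen
          have hbt : t.count 0 = t.count 1 := by omega
          have du := ih u (by omega) 1 (by rw [cls_1]; exact hbu)
          have dt := ih t (by omega) 1 (by rw [cls_1]; exact hbt)
          exact der2 (by simp [ruleList, t0, t1, nS, nE, nA, nB]) du dt
    · -- X = A : more 0s than 1s
      rw [cls_2, Set.mem_setOf_eq] at hX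
      obtain ⟨u, t, rfl, hbu⟩ := (split_aux (n+1) w hw).2 hX
      simp only [List.count_append, List.count_cons, List.length_append,
        List.length_cons] at hX hw
      norm_num at hX hw
      have du := ih u (by omega) 1 (by rw [cls_1]; exact hbu)
      rcases Nat.lt_or_ge (t.count 1) (t.count 0) with hlt | hge
      · have dt := ih t (by omega) 2 (by rw [cls_2]; exact hlt)
        exact der2m (by simp [ruleList, t0, t1, nS, nE, nA, nB]) du dt
      · have hbt : t.count 0 = t.count 1 := by omega
        have dt := ih t (by omega) 1 (by rw [cls_1]; exact hbt)
        exact der2m (by simp [ruleList, t0, t1, nS, nE, nA, nB]) du dt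
    · -- X = B : more 1s than 0s
      rw [cls_3, Set.mem_setOf_eq] at hX
      obtain ⟨u, t, rfl, hbu⟩ := (split_aux (n+1) w hw).1 hX
      simp only [List.count_append, List.count_cons, List.length_append,
        List.length_cons] at hX hw
      norm_num at hX hw
      have du := ih u (by omega) 1 (by rw [cls_1]; exact hbu)
      rcases Nat.lt_or_ge (t.count 0) (t.count 1) with hlt | hge
      · have dt := ih t (by omega) 3 (by rw [cls_3]; exact hlt)
        exact der2m (by simp [ruleList, t0, t1, nS, nE, nA, nB]) du dt
      · have hbt : t.count 0 = t.count 1 := by omega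
        have dt := ih t (by omega) 1 (by rw [cls_1]; exact hbt)
        exact der2m (by simp [ruleList, t0, t1, nS, nE, nA, nB]) du dt

lemma lang_complete {w : List (Fin 2)} (h : w ∈ Lang) : w ∈ G.language := by
  rw [ContextFreeGrammar.mem_language_iff]
  exact der_cls w.length w le_rfl 0 (by rw [cls_0]; exact h)

lemma isCF_Lang : ∃ g : ContextFreeGrammar.{0} (Fin 2), ∀ w, w ∈ g.language ↔ w ∈ Lang :=
  ⟨G, fun w => ⟨lang_sound, lang_complete⟩⟩

end grammar


/-- Counting-regular languages are not closed under union or intersection with regular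
languages: there are a context-free counting-regular `L` and a regular `R` over `{0,1}`
such that neither `L ∩ R` nor `L ∪ R` is counting-regular. -/
theorem stmt13 :
    ∃ L R : Set (List (Fin 2)), IsCFLang L ∧ CountingRegular L ∧ IsRegularLang R ∧
      ¬ CountingRegular (L ∩ R) ∧ ¬ CountingRegular (L ∪ R) :=
  ⟨Lang, Rlang, isCF_Lang, countingRegular_Lang, reg_R, not_cr_inter, not_cr_union⟩
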